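/- Let y : [0,∞) → [0,∞) be absolutely continuous and β : [0,∞) → [0,∞) locally integrable with ∫_t^{t+1} β(r) dr ≤ Cε for all t ≥ 0, where Cε < α/16 for some α > 0. Suppose y'(t) + (α/4)y(t) ≤ 2β(t)y(t) + f(t) with f ≥ 0 locally integrable. Then y(t) ≤ e^{−(α/8)t + α/8} y(0) + e^{α/8} ∫₀ᵗ e^{−(α/8)(t−s)} f(s) ds for all t ≥ 0. -/

import Mathlib

open MeasureTheory Set

/-- If on all sufficiently small subintervals of `[s,t]` the integral of `φ` is bounded by
the increment of `V` plus `ε` times the increment of `W`, then the integral over `[s,t]`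
is bounded by the increment of `V`. -/
lemma integral_le_of_le_piece {φ V W : ℝ → ℝ} {s t : ℝ} (hst : s ≤ t)
    (hφ : IntervalIntegrable φ volume s t)
    (hWs : W s ≤ W t)
    (h : ∀ ε > (0:ℝ), ∃ δ > (0:ℝ), ∀ p q : ℝ, s ≤ p → p ≤ q → q ≤ t → q - p ≤ δ →
      (∫ r in p..q, φ r) ≤ V q - V p + ε * (W q - W p)) :
    (∫ r in s..t, φ r) ≤ V t - V s := by
  have main : ∀ ε > (0:ℝ), (∫ r in s..t, φ r) ≤ V t - V s + ε * (W t - W s) := by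
    intro ε hε
    obtain ⟨δ, hδ, hloc⟩ := h ε hε
    obtain ⟨n, hn⟩ := exists_nat_ge ((t - s) / δ)
    set m : ℕ := n + 1 with hm
    have hm0 : (0:ℝ) < (m:ℝ) := by positivity
    have hts : 0 ≤ t - s := by linarith
    have hstep0 : 0 ≤ (t - s) / m := by positivity
    have hstep : (t - s) / m ≤ δ := by
      rw [div_le_iff₀ hm0]
      have h1 : (t - s) / δ ≤ (m:ℝ) := by
        refine le_trans hn ?_
        exact_mod_cast Nat.le_succ n
      have := mul_le_mul_of_nonneg_right h1 hδ.le
      calc t - s = (t - s) / δ * δ := by field_simp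
        _ ≤ (m:ℝ) * δ := this
        _ = δ * (m:ℝ) := by ring
    set r : ℕ → ℝ := fun i => s + i * ((t - s) / m) with hr
    have hr0 : r 0 = s := by simp [hr]
    have hrm : r m = t := by
      simp only [hr]
      field_simp
      ring
    have hmm : (m:ℝ) * ((t - s) / m) = t - s := by field_simp
    have hrle : ∀ i : ℕ, i ≤ m → s ≤ r i ∧ r i ≤ t := by
      intro i hi
      have hic : (i:ℝ) ≤ (m:ℝ) := by exact_mod_cast hi
      have h1 : (i:ℝ) * ((t - s) / m) ≤ (m:ℝ) * ((t - s) / m) :=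
        mul_le_mul_of_nonneg_right hic hstep0
      have h2 : 0 ≤ (i:ℝ) * ((t - s) / m) :=
        mul_nonneg (Nat.cast_nonneg i) hstep0
      constructor
      · simp only [hr]; linarith
      · simp only [hr]; linarith
    have hrsucc : ∀ i : ℕ, r (i+1) - r i = (t - s) / m := by
      intro i; simp only [hr]; push_cast; ring
    clear_value r
    have hint : ∀ k : ℕ, k < m → IntervalIntegrable φ volume (r k) (r (k+1)) := by
      intro k hk
      refine hφ.mono_set ?_
      rw [uIcc_of_le hst, uIcc_of_le (by linarith [hrsucc k] : r k ≤ r (k+1))]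
      exact Icc_subset_Icc (hrle k hk.le).1 (hrle (k+1) hk).2
    have hsum : ∑ k ∈ Finset.range m, ∫ x in r k..r (k+1), φ x = ∫ x in s..t, φ x := by
      rw [intervalIntegral.sum_integral_adjacent_intervals hint, hr0, hrm]
    rw [← hsum]
    have hbound : ∀ k ∈ Finset.range m,
        (∫ x in r k..r (k+1), φ x) ≤ (V (r (k+1)) - V (r k)) + ε * (W (r (k+1)) - W (r k)) := by
      intro k hk
      rw [Finset.mem_range] at hk
      refine hloc (r k) (r (k+1)) (hrle k hk.le).1 (by linarith [hrsucc k]) (hrle (k+1) hk).2 ?_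
      rw [hrsucc k]; exact hstep
    calc ∑ k ∈ Finset.range m, ∫ x in r k..r (k+1), φ x
        ≤ ∑ k ∈ Finset.range m, ((V (r (k+1)) - V (r k)) + ε * (W (r (k+1)) - W (r k))) :=
          Finset.sum_le_sum hbound
      _ = (V (r m) - V (r 0)) + ε * (W (r m) - W (r 0)) := by
          rw [Finset.sum_add_distrib, Finset.sum_range_sub (fun i => V (r i)),
            ← Finset.mul_sum, Finset.sum_range_sub (fun i => W (r i))]
      _ = V t - V s + ε * (W t - W s) := by rw [hr0, hrm]
  refine le_of_forall_pos_le_add ?_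
  intro ε hε
  have hc : (0:ℝ) < W t - W s + 1 := by linarith
  have := main (ε / (W t - W s + 1)) (by positivity)
  have h2 : ε / (W t - W s + 1) * (W t - W s) ≤ ε := by
    rw [div_mul_eq_mul_div, div_le_iff₀ hc]
    nlinarith
  linarith

/-- Primitive inequality: `∫ a·exp(A) ≤ exp(A t) - exp(A s)` when `A` is a primitive of the
nonnegative integrable function `a`. -/
lemma key_exp {a A : ℝ → ℝ} {s t : ℝ} (hst : s ≤ t)
    (ha0 : ∀ r, 0 ≤ a r)
    (haint : IntegrableOn a (Icc s t))
    (hA : ∀ p q : ℝ, s ≤ p → p ≤ q → q ≤ t → (∫ r in p..q, a r) = A q - A p) :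
    (∫ r in s..t, a r * Real.exp (A r)) ≤ Real.exp (A t) - Real.exp (A s) := by
  -- A is monotone on [s,t]
  have hAmono : ∀ p q : ℝ, s ≤ p → p ≤ q → q ≤ t → A p ≤ A q := by
    intro p q hsp hpq hqt
    have h1 : (0:ℝ) ≤ ∫ r in p..q, a r :=
      intervalIntegral.integral_nonneg hpq (fun r _ => ha0 r)
    rw [hA p q hsp hpq hqt] at h1
    linarith
  -- A is continuous on [s,t]
  have hAcont : ContinuousOn A (Icc s t) := by
    have h1 : ContinuousOn (fun x => A s + ∫ r in Ioc s x, a r) (Icc s t) :=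
      continuousOn_const.add (intervalIntegral.continuousOn_primitive haint)
    refine ContinuousOn.congr h1 ?_
    intro x hx
    have h2 := hA s x le_rfl hx.1 hx.2
    rw [intervalIntegral.integral_of_le hx.1] at h2
    dsimp only
    linarith [h2]
  have hEcont : ContinuousOn (fun r => Real.exp (A r)) (Icc s t) :=
    Real.continuous_exp.comp_continuousOn hAcont
  have hφint : IntegrableOn (fun r => a r * Real.exp (A r)) (Icc s t) :=
    haint.mul_continuousOn hEcont isCompact_Icc
  have hφII : IntervalIntegrable (fun r => a r * Real.exp (A r)) volume s t := by
    rw [intervalIntegrable_iff_integrableOn_Icc_of_le hst]; exact hφint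
  refine integral_le_of_le_piece (V := fun r => Real.exp (A r)) (W := fun r => Real.exp (A r)) hst hφII
    (Real.exp_le_exp.2 (hAmono s t le_rfl hst le_rfl)) ?_
  intro ε hε
  -- uniform continuity of A
  have hunif := (isCompact_Icc (a := s) (b := t)).uniformContinuousOn_of_continuous hAcont
  rw [Metric.uniformContinuousOn_iff] at hunif
  have hlog : (0:ℝ) < Real.log (1 + ε) := Real.log_pos (by linarith)
  obtain ⟨δ, hδ, hδ'⟩ := hunif (Real.log (1 + ε)) hlog
  refine ⟨δ / 2, by positivity, ?_⟩
  intro p q hsp hpq hqt hpqδ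
  have hpI : p ∈ Icc s t := ⟨hsp, hpq.trans hqt⟩
  have hqI : q ∈ Icc s t := ⟨hsp.trans hpq, hqt⟩
  have hdist : dist p q < δ := by
    rw [Real.dist_eq, abs_sub_comm, abs_of_nonneg (by linarith)]
    linarith
  have hAd : A q - A p < Real.log (1 + ε) := by
    have := hδ' p hpI q hqI hdist
    rw [Real.dist_eq] at this
    calc A q - A p ≤ |A q - A p| := le_abs_self _
      _ = |A p - A q| := (abs_sub_comm _ _)
      _ < _ := this
  have hAd0 : 0 ≤ A q - A p := by linarith [hAmono p q hsp hpq hqt]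
  -- pointwise bound on [p,q]
  have hint1 : IntervalIntegrable (fun r => a r * Real.exp (A r)) volume p q :=
    hφII.mono_set (by rw [uIcc_of_le hst, uIcc_of_le hpq]; exact Icc_subset_Icc hsp hqt)
  have hint2 : IntervalIntegrable (fun r => a r * Real.exp (A q)) volume p q := by
    have : IntervalIntegrable a volume p q := by
      rw [intervalIntegrable_iff_integrableOn_Icc_of_le hpq]
      exact haint.mono_set (Icc_subset_Icc hsp hqt)
    exact this.mul_const _
  have hmono : (∫ r in p..q, a r * Real.exp (A r)) ≤ ∫ r in p..q, a r * Real.exp (A q) := by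
    refine intervalIntegral.integral_mono_on hpq hint1 hint2 ?_
    intro x hx
    have hxI : x ∈ Icc s t := ⟨hsp.trans hx.1, hx.2.trans hqt⟩
    exact mul_le_mul_of_nonneg_left
      (Real.exp_le_exp.2 (hAmono x q (hsp.trans hx.1) hx.2 hqt)) (ha0 x)
  have heval : (∫ r in p..q, a r * Real.exp (A q)) = (A q - A p) * Real.exp (A q) := by
    rw [intervalIntegral.integral_mul_const, hA p q hsp hpq hqt]
  -- arithmetic
  have hexp : Real.exp (A q) = Real.exp (A p) * Real.exp (A q - A p) := by
    rw [← Real.exp_add]; ring_nf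
  have h1 : A q - A p ≤ Real.exp (A q - A p) - 1 := by
    linarith [Real.add_one_le_exp (A q - A p)]
  have h2 : Real.exp (A q - A p) ≤ 1 + ε := by
    calc Real.exp (A q - A p) ≤ Real.exp (Real.log (1 + ε)) := Real.exp_le_exp.2 hAd.le
      _ = 1 + ε := Real.exp_log (by linarith)
  have hEp : (0:ℝ) < Real.exp (A p) := Real.exp_pos _
  have harith : (A q - A p) * Real.exp (A q) ≤
      (Real.exp (A q) - Real.exp (A p)) + ε * (Real.exp (A q) - Real.exp (A p)) := by
    rw [hexp]
    set d := A q - A p with hd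
    set E := Real.exp (A p) with hE
    set X := Real.exp d with hX
    have hX0 : (0:ℝ) < X := Real.exp_pos _
    have hd1 : 0 ≤ X - 1 := by linarith
    have step1 : d * (E * X) ≤ (X - 1) * (E * X) :=
      mul_le_mul_of_nonneg_right (by linarith) (by positivity)
    have step3 : (E * (X - 1)) * X ≤ (E * (X - 1)) * (1 + ε) :=
      mul_le_mul_of_nonneg_left h2 (by positivity)
    nlinarith [step1, step3]
  calc (∫ r in p..q, a r * Real.exp (A r)) ≤ (A q - A p) * Real.exp (A q) := by
        rw [← heval]; exact hmono
    _ ≤ _ := harith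

lemma integrableOn_cont_mul {c f : ℝ → ℝ} {s t : ℝ} (hf : IntegrableOn f (Icc s t))
    (hc : ContinuousOn c (Icc s t)) : IntegrableOn (fun x => c x * f x) (Icc s t) := by
  have h := hf.mul_continuousOn hc isCompact_Icc
  have : (fun x => f x * c x) = fun x => c x * f x := by funext x; ring
  rwa [this] at h


lemma intOn_add {f g : ℝ → ℝ} {s : Set ℝ} (hf : IntegrableOn f s) (hg : IntegrableOn g s) :
    IntegrableOn (fun x => f x + g x) s := by
  exact hf.add hg

lemma gronwall_core {u u' a g A : ℝ → ℝ} {T : ℝ} (hT : 0 ≤ T)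
    (hu : ∀ r ∈ Icc (0:ℝ) T, HasDerivAt u (u' r) r)
    (hu0 : 0 ≤ u 0)
    (ha0 : ∀ r, 0 ≤ a r)
    (haint : IntegrableOn a (Icc 0 T))
    (hg0 : ∀ r, 0 ≤ g r)
    (hgint : IntegrableOn g (Icc 0 T))
    (hA : ∀ p q : ℝ, 0 ≤ p → p ≤ q → q ≤ T → (∫ r in p..q, a r) = A q - A p)
    (hA0 : A 0 = 0)
    (hineq : ∀ r ∈ Icc (0:ℝ) T, u' r ≤ a r * u r + g r) :
    u T ≤ Real.exp (A T) * (u 0 + ∫ s in Ioc (0:ℝ) T, Real.exp (-A s) * g s) := by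
  -- basic facts about A
  have hAmono : ∀ p q : ℝ, 0 ≤ p → p ≤ q → q ≤ T → A p ≤ A q := by
    intro p q hsp hpq hqt
    have h1 : (0:ℝ) ≤ ∫ r in p..q, a r :=
      intervalIntegral.integral_nonneg hpq (fun r _ => ha0 r)
    rw [hA p q hsp hpq hqt] at h1
    linarith
  have hAcont : ContinuousOn A (Icc 0 T) := by
    have h1 : ContinuousOn (fun x => A 0 + ∫ r in Ioc (0:ℝ) x, a r) (Icc 0 T) :=
      continuousOn_const.add (intervalIntegral.continuousOn_primitive haint)
    refine ContinuousOn.congr h1 ?_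
    intro x hx
    have h2 := hA 0 x le_rfl hx.1 hx.2
    rw [intervalIntegral.integral_of_le hx.1] at h2
    dsimp only
    linarith [h2]
  have hEcont : ContinuousOn (fun r => Real.exp (A r)) (Icc 0 T) :=
    Real.continuous_exp.comp_continuousOn hAcont
  have hE'cont : ContinuousOn (fun r => Real.exp (-A r)) (Icc 0 T) :=
    Real.continuous_exp.comp_continuousOn hAcont.neg
  have hucont : ContinuousOn u (Icc 0 T) :=
    fun r hr => (hu r hr).continuousAt.continuousWithinAt
  have hauint : IntegrableOn (fun r => a r * u r) (Icc 0 T) :=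
    haint.mul_continuousOn hucont isCompact_Icc
  -- main claim with margin ε₀
  have main : ∀ ε₀ > (0:ℝ), u T ≤ Real.exp (A T) *
      (u 0 + ε₀ + ∫ s in Ioc (0:ℝ) T, Real.exp (-A s) * (g s + ε₀)) := by
    intro ε₀ hε₀
    set h : ℝ → ℝ := fun r => g r + ε₀ with hh
    have hh0 : ∀ r, 0 ≤ h r := fun r => add_nonneg (hg0 r) hε₀.le
    have hhint : IntegrableOn h (Icc 0 T) :=
      hgint.add (integrableOn_const measure_Icc_lt_top.ne)
    have hEh_int : IntegrableOn (fun r => Real.exp (-A r) * h r) (Icc 0 T) :=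
      integrableOn_cont_mul hhint hE'cont
    set D : ℝ → ℝ := fun r => u 0 + ε₀ + ∫ q in Ioc (0:ℝ) r, Real.exp (-A q) * h q with hD
    have hDspec : ∀ p q : ℝ, 0 ≤ p → p ≤ q → q ≤ T →
        D q - D p = ∫ r in p..q, Real.exp (-A r) * h r := by
      intro p q h0p hpq hqT
      have i1 : IntervalIntegrable (fun r => Real.exp (-A r) * h r) volume 0 q := by
        rw [intervalIntegrable_iff_integrableOn_Icc_of_le (h0p.trans hpq)]
        exact hEh_int.mono_set (Icc_subset_Icc le_rfl hqT)
      have i2 : IntervalIntegrable (fun r => Real.exp (-A r) * h r) volume 0 p := by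
        rw [intervalIntegrable_iff_integrableOn_Icc_of_le h0p]
        exact hEh_int.mono_set (Icc_subset_Icc le_rfl (hpq.trans hqT))
      have e1 : D q - D p =
          (∫ r in (0:ℝ)..q, Real.exp (-A r) * h r) - ∫ r in (0:ℝ)..p, Real.exp (-A r) * h r := by
        simp only [hD]
        rw [intervalIntegral.integral_of_le (h0p.trans hpq), intervalIntegral.integral_of_le h0p]
        ring
      rw [e1, intervalIntegral.integral_interval_sub_left i1 i2]
    have hDmono : ∀ p q : ℝ, 0 ≤ p → p ≤ q → q ≤ T → D p ≤ D q := by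
      intro p q h0p hpq hqT
      have h1 : (0:ℝ) ≤ ∫ r in p..q, Real.exp (-A r) * h r :=
        intervalIntegral.integral_nonneg hpq
          (fun x _ => mul_nonneg (Real.exp_pos _).le (hh0 x))
      linarith [hDspec p q h0p hpq hqT]
    have hDcont : ContinuousOn D (Icc 0 T) :=
      continuousOn_const.add (intervalIntegral.continuousOn_primitive hEh_int)
    have hDpos : ∀ r, 0 ≤ r → 0 < D r := by
      intro r h0r
      have h1 : (0:ℝ) ≤ ∫ q in Ioc (0:ℝ) r, Real.exp (-A q) * h q :=
        setIntegral_nonneg measurableSet_Ioc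
          (fun x _ => mul_nonneg (Real.exp_pos _).le (hh0 x))
      simp only [hD]
      linarith
    set P : ℝ → ℝ := fun r => Real.exp (A r) * D r with hP
    have hPcont : ContinuousOn P (Icc 0 T) := hEcont.mul hDcont
    have haP_int : IntegrableOn (fun r => a r * P r) (Icc 0 T) :=
      haint.mul_continuousOn hPcont isCompact_Icc
    have haE_int : IntegrableOn (fun r => a r * Real.exp (A r)) (Icc 0 T) :=
      haint.mul_continuousOn hEcont isCompact_Icc
    -- supersolution property of P
    have SUP : ∀ c : ℝ, 0 ≤ c → c ≤ T →
        (∫ r in (0:ℝ)..c, (a r * P r + h r)) ≤ P c - P 0 := by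
      intro c h0c hcT
      have hφII : IntervalIntegrable (fun r => a r * P r + h r) volume 0 c := by
        rw [intervalIntegrable_iff_integrableOn_Icc_of_le h0c]
        exact (intOn_add haP_int hhint).mono_set (Icc_subset_Icc le_rfl hcT)
      refine integral_le_of_le_piece (V := P) (W := fun r => Real.exp (A r)) h0c hφII
        (Real.exp_le_exp.2 (hAmono 0 c le_rfl h0c hcT)) ?_
      intro ε hε
      have hunif := (isCompact_Icc (a := (0:ℝ)) (b := T)).uniformContinuousOn_of_continuous hDcont
      rw [Metric.uniformContinuousOn_iff] at hunif
      obtain ⟨δ, hδ, hδ'⟩ := hunif ε hε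
      refine ⟨δ / 2, by positivity, ?_⟩
      intro p q h0p hpq hqc hpqδ
      have hqT : q ≤ T := hqc.trans hcT
      have hpI : p ∈ Icc (0:ℝ) T := ⟨h0p, hpq.trans hqT⟩
      have hqI : q ∈ Icc (0:ℝ) T := ⟨h0p.trans hpq, hqT⟩
      have hDq := hδ' p hpI q hqI
        (by rw [Real.dist_eq, abs_sub_comm, abs_of_nonneg (by linarith)]; linarith)
      have hDd : D q - D p < ε := by
        rw [Real.dist_eq] at hDq
        calc D q - D p ≤ |D q - D p| := le_abs_self _
          _ = |D p - D q| := abs_sub_comm _ _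
          _ < ε := hDq
      have hDd0 : 0 ≤ D q - D p := by linarith [hDmono p q h0p hpq hqT]
      have hEd0 : 0 ≤ Real.exp (A q) - Real.exp (A p) := by
        linarith [Real.exp_le_exp.2 (hAmono p q h0p hpq hqT)]
      -- integrabilities on [p,q]
      have hsubpq : Icc p q ⊆ Icc (0:ℝ) T := Icc_subset_Icc h0p hqT
      have iaP : IntervalIntegrable (fun r => a r * P r) volume p q := by
        rw [intervalIntegrable_iff_integrableOn_Icc_of_le hpq]
        exact haP_int.mono_set hsubpq
      have ih : IntervalIntegrable h volume p q := by
        rw [intervalIntegrable_iff_integrableOn_Icc_of_le hpq]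
        exact hhint.mono_set hsubpq
      have iaE : IntervalIntegrable (fun r => a r * Real.exp (A r)) volume p q := by
        rw [intervalIntegrable_iff_integrableOn_Icc_of_le hpq]
        exact haE_int.mono_set hsubpq
      have iEh : IntervalIntegrable (fun r => Real.exp (-A r) * h r) volume p q := by
        rw [intervalIntegrable_iff_integrableOn_Icc_of_le hpq]
        exact hEh_int.mono_set hsubpq
      -- step A: split the integral
      have stepA : (∫ r in p..q, (a r * P r + h r)) =
          (∫ r in p..q, a r * P r) + ∫ r in p..q, h r :=
        intervalIntegral.integral_add iaP ih
      -- step B: bound a·P by a·exp(A)·D q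
      have stepB : (∫ r in p..q, a r * P r) ≤ ∫ r in p..q, a r * Real.exp (A r) * D q := by
        refine intervalIntegral.integral_mono_on hpq iaP (iaE.mul_const _) ?_
        intro x hx
        have hx0 : (0:ℝ) ≤ x := h0p.trans hx.1
        have hDle : D x ≤ D q := hDmono x q hx0 hx.2 hqT
        have := mul_le_mul_of_nonneg_left hDle
          (mul_nonneg (ha0 x) (Real.exp_pos (A x)).le)
        simp only [hP]
        calc a x * (Real.exp (A x) * D x) = a x * Real.exp (A x) * D x := by ring
          _ ≤ a x * Real.exp (A x) * D q := this
      -- step C: key exponential estimate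
      have stepC : (∫ r in p..q, a r * Real.exp (A r) * D q) ≤
          (Real.exp (A q) - Real.exp (A p)) * D q := by
        rw [intervalIntegral.integral_mul_const]
        refine mul_le_mul_of_nonneg_right ?_ (hDpos q (h0p.trans hpq)).le
        refine key_exp hpq ha0 (haint.mono_set hsubpq) ?_
        intro p' q' hp' hq' hq''
        exact hA p' q' (h0p.trans hp') hq' (hq''.trans hqT)
      -- step D: expand P q - P p
      have stepD : P q - P p =
          (Real.exp (A q) - Real.exp (A p)) * D p + Real.exp (A q) * (D q - D p) := by
        simp only [hP]; ring
      -- step E: lower bound for the D-increment term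
      have stepE : (∫ r in p..q, h r) ≤ Real.exp (A q) * (D q - D p) := by
        rw [hDspec p q h0p hpq hqT, ← intervalIntegral.integral_const_mul]
        refine intervalIntegral.integral_mono_on hpq ih (iEh.const_mul _) ?_
        intro x hx
        have hx0 : (0:ℝ) ≤ x := h0p.trans hx.1
        have h1 : (1:ℝ) ≤ Real.exp (A q) * Real.exp (-A x) := by
          rw [← Real.exp_add]
          have : (0:ℝ) ≤ A q + -A x := by linarith [hAmono x q hx0 hx.2 hqT]
          calc (1:ℝ) = Real.exp 0 := Real.exp_zero.symm
            _ ≤ _ := Real.exp_le_exp.2 this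
        calc h x = 1 * h x := (one_mul _).symm
          _ ≤ Real.exp (A q) * Real.exp (-A x) * h x :=
              mul_le_mul_of_nonneg_right h1 (hh0 x)
          _ = Real.exp (A q) * (Real.exp (-A x) * h x) := by ring
      have stepF : (Real.exp (A q) - Real.exp (A p)) * (D q - D p) ≤
          ε * (Real.exp (A q) - Real.exp (A p)) := by
        calc (Real.exp (A q) - Real.exp (A p)) * (D q - D p)
            ≤ (Real.exp (A q) - Real.exp (A p)) * ε := mul_le_mul_of_nonneg_left hDd.le hEd0
          _ = ε * (Real.exp (A q) - Real.exp (A p)) := by ring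
      have hDpq : D p ≤ D q := by linarith
      have hDppos : 0 < D p := hDpos p h0p
      nlinarith [stepA, stepB, stepC, stepD, stepE, stepF,
        mul_le_mul_of_nonneg_left hDpq hEd0]
    -- FTC inequality for u
    have FTC : ∀ c : ℝ, 0 ≤ c → c ≤ T →
        u c - u 0 ≤ ∫ r in (0:ℝ)..c, (a r * u r + g r) := by
      intro c h0c hcT
      have hsub : Icc (0:ℝ) c ⊆ Icc 0 T := Icc_subset_Icc le_rfl hcT
      refine intervalIntegral.sub_le_integral_of_hasDeriv_right_of_le (g' := u') h0c (hucont.mono hsub)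
        ?_ ?_ ?_
      · intro x hx
        exact (hu x ⟨hx.1.le, hx.2.le.trans hcT⟩).hasDerivWithinAt
      · exact (intOn_add hauint hgint).mono_set hsub
      · intro x hx
        exact hineq x ⟨hx.1.le, hx.2.le.trans hcT⟩
    -- no-crossing argument
    have hall : ∀ c ∈ Icc (0:ℝ) T, u c ≤ P c := by
      by_contra hcon
      push_neg at hcon
      obtain ⟨t₀, ht₀I, ht₀⟩ := hcon
      set S : Set ℝ := {r | r ∈ Icc (0:ℝ) T ∧ P r < u r} with hS
      have hSne : S.Nonempty := ⟨t₀, ht₀I, ht₀⟩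
      have hSsub : S ⊆ Icc 0 T := fun r hr => hr.1
      have hSbdd : BddBelow S := BddBelow.mono hSsub bddBelow_Icc
      set c := sInf S with hc
      have hcC : c ∈ Icc (0:ℝ) T ∩ {r | P r ≤ u r} := by
        have hF : ContinuousOn (fun r => (P r, u r)) (Icc 0 T) := hPcont.prodMk hucont
        have hclosed : IsClosed (Icc (0:ℝ) T ∩ (fun r => (P r, u r)) ⁻¹' {p : ℝ × ℝ | p.1 ≤ p.2}) :=
          hF.preimage_isClosed_of_isClosed isClosed_Icc isClosed_le_prod
        have hsub2 : closure S ⊆ Icc (0:ℝ) T ∩ (fun r => (P r, u r)) ⁻¹' {p : ℝ × ℝ | p.1 ≤ p.2} := by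
          refine hclosed.closure_subset_iff.2 ?_
          intro r hr
          exact ⟨hr.1, le_of_lt hr.2⟩
        exact hsub2 (csInf_mem_closure hSne hSbdd)
      obtain ⟨hcI, hPcu⟩ := hcC
      have hbefore : ∀ r, 0 ≤ r → r < c → u r ≤ P r := by
        intro r h0r hrc
        by_contra hru
        push_neg at hru
        have hrS : r ∈ S := ⟨⟨h0r, hrc.le.trans hcI.2⟩, hru⟩
        exact absurd (csInf_le hSbdd hrS) (not_le.2 hrc)
      have h0c : (0:ℝ) ≤ c := hcI.1
      have hcT' : c ≤ T := hcI.2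
      have e1 : u c - u 0 ≤ ∫ r in (0:ℝ)..c, (a r * u r + g r) := FTC c h0c hcT'
      have hsubc : Ioo (0:ℝ) c ⊆ Icc 0 T := fun x hx => ⟨hx.1.le, hx.2.le.trans hcT'⟩
      have eIoo : (∫ r in (0:ℝ)..c, (a r * u r + g r)) =
          ∫ r in Ioo (0:ℝ) c, (a r * u r + g r) := by
        rw [intervalIntegral.integral_of_le h0c, integral_Ioc_eq_integral_Ioo]
      have e2 : (∫ r in Ioo (0:ℝ) c, (a r * u r + g r)) ≤
          ∫ r in Ioo (0:ℝ) c, (a r * P r + g r) := by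
        refine setIntegral_mono_on ((intOn_add hauint hgint).mono_set hsubc)
          ((intOn_add haP_int hgint).mono_set hsubc) measurableSet_Ioo ?_
        intro x hx
        have h1 := hbefore x hx.1.le hx.2
        have h2 := mul_le_mul_of_nonneg_left h1 (ha0 x)
        linarith
      have e3 : (∫ r in Ioo (0:ℝ) c, (a r * P r + h r)) =
          (∫ r in Ioo (0:ℝ) c, (a r * P r + g r)) + ε₀ * c := by
        have i1 : IntegrableOn (fun r => a r * P r + g r) (Ioo 0 c) :=
          (intOn_add haP_int hgint).mono_set hsubc
        have i2 : IntegrableOn (fun _ : ℝ => ε₀) (Ioo 0 c) :=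
          integrableOn_const measure_Ioo_lt_top.ne
        have hfe : (fun r => a r * P r + h r) = fun r => (a r * P r + g r) + ε₀ := by
          funext r; simp only [hh]; ring
        rw [hfe, integral_add i1 i2]
        congr 1
        rw [setIntegral_const]
        simp [Real.volume_Ioo, ENNReal.toReal_ofReal h0c, smul_eq_mul]
        rw [max_eq_left h0c]; ring
      have e4 : (∫ r in Ioo (0:ℝ) c, (a r * P r + h r)) =
          ∫ r in (0:ℝ)..c, (a r * P r + h r) := by
        rw [intervalIntegral.integral_of_le h0c, integral_Ioc_eq_integral_Ioo]
      have e5 := SUP c h0c hcT'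
      have hP0 : P 0 = u 0 + ε₀ := by
        simp [hP, hD, hA0]
      have hεc : 0 ≤ ε₀ * c := mul_nonneg hε₀.le h0c
      have hfinal : u c < P c := by linarith
      exact absurd hPcu (not_le.2 hfinal)
    have hPT := hall T ⟨hT, le_rfl⟩
    have hPTeq : P T = Real.exp (A T) *
        (u 0 + ε₀ + ∫ s in Ioc (0:ℝ) T, Real.exp (-A s) * (g s + ε₀)) := by
      simp only [hP, hD, hh]
    rwa [hPTeq] at hPT
  -- let ε₀ → 0
  set I := ∫ s in Ioc (0:ℝ) T, Real.exp (-A s) * g s with hI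
  set J := ∫ s in Ioc (0:ℝ) T, Real.exp (-A s) with hJ
  have hJ0 : 0 ≤ J := setIntegral_nonneg measurableSet_Ioc (fun x _ => (Real.exp_pos _).le)
  have hE'int : IntegrableOn (fun s => Real.exp (-A s)) (Ioc 0 T) :=
    (hE'cont.integrableOn_Icc).mono_set Ioc_subset_Icc_self
  have hEgint : IntegrableOn (fun s => Real.exp (-A s) * g s) (Ioc 0 T) :=
    (integrableOn_cont_mul hgint hE'cont).mono_set Ioc_subset_Icc_self
  have hsplit : ∀ ε₀ : ℝ, (∫ s in Ioc (0:ℝ) T, Real.exp (-A s) * (g s + ε₀)) = I + ε₀ * J := by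
    intro ε₀
    have hfe : (fun s => Real.exp (-A s) * (g s + ε₀)) =
        fun s => Real.exp (-A s) * g s + ε₀ * Real.exp (-A s) := by
      funext s; ring
    rw [hfe, integral_add hEgint (hE'int.const_mul ε₀), integral_const_mul]
  refine le_of_forall_pos_le_add ?_
  intro ε hε
  have hC : (0:ℝ) < Real.exp (A T) * (1 + J) := by positivity
  have hmain := main (ε / (Real.exp (A T) * (1 + J))) (by positivity)
  rw [hsplit] at hmain
  set c := Real.exp (A T) * (1 + J) with hcdef
  have heq : Real.exp (A T) * (u 0 + ε / c + (I + ε / c * J)) =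
      Real.exp (A T) * (u 0 + I) + (ε / c) * c := by
    rw [hcdef]; ring
  rw [heq, div_mul_cancel₀ _ hC.ne'] at hmain
  linarith

lemma beta_int_nat {β : ℝ → ℝ} (hβint : ∀ t : ℝ, IntegrableOn β (Icc t (t+1))) :
    ∀ n : ℕ, IntegrableOn β (Icc 0 (n:ℝ)) := by
  intro n
  induction n with
  | zero =>
      refine (hβint 0).mono_set ?_
      simp only [Nat.cast_zero]
      exact Icc_subset_Icc_right (by norm_num)
  | succ n ih =>
      refine (ih.union (hβint n)).mono_set ?_
      intro x hx
      by_cases hxn : x ≤ (n:ℝ)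
      · exact Or.inl ⟨hx.1, hxn⟩
      · refine Or.inr ⟨le_of_not_ge hxn, ?_⟩
        have := hx.2
        push_cast at this ⊢
        linarith

lemma beta_int {β : ℝ → ℝ} (hβint : ∀ t : ℝ, IntegrableOn β (Icc t (t+1)))
    (p q : ℝ) (hp : 0 ≤ p) : IntegrableOn β (Icc p q) :=
  (beta_int_nat hβint ⌈q⌉₊).mono_set (Icc_subset_Icc hp (Nat.le_ceil q))

lemma beta_bound {β : ℝ → ℝ} {Cε : ℝ} (hβ0 : ∀ t : ℝ, 0 ≤ β t)
    (hβint : ∀ t : ℝ, IntegrableOn β (Icc t (t+1)))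
    (hβ : ∀ t ≥ (0:ℝ), ∫ r in Icc t (t + 1), β r ≤ Cε) (hCε0 : 0 ≤ Cε) :
    ∀ n : ℕ, ∀ p q : ℝ, 0 ≤ p → p ≤ q → q ≤ p + n → (∫ r in Ioc p q, β r) ≤ n * Cε := by
  intro n
  induction n with
  | zero =>
      intro p q h0p hpq hq
      have hqp : q = p := le_antisymm (by simpa using hq) hpq
      subst hqp
      simp
  | succ n ih =>
      intro p q h0p hpq hq
      push_cast at hq
      by_cases hqn : q ≤ p + n
      · have h1 := ih p q h0p hpq hqn
        have h2 : (n:ℝ) * Cε ≤ (↑(n+1)) * Cε := by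
          push_cast; nlinarith
        linarith
      · push_neg at hqn
        have hpn : p + n ≤ q := hqn.le
        have hppn : p ≤ p + n := by
          have : (0:ℝ) ≤ (n:ℝ) := Nat.cast_nonneg n
          linarith
        have hsplit : Ioc p q = Ioc p (p+n) ∪ Ioc (p+n) q := (Ioc_union_Ioc_eq_Ioc hppn hpn).symm
        have i1 : IntegrableOn β (Ioc p (p+(n:ℝ))) :=
          (beta_int hβint p (p+n) h0p).mono_set Ioc_subset_Icc_self
        have i2 : IntegrableOn β (Ioc (p+(n:ℝ)) q) :=
          (beta_int hβint (p+n) q (by linarith)).mono_set Ioc_subset_Icc_self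
        rw [hsplit, setIntegral_union (Ioc_disjoint_Ioc_of_le le_rfl) measurableSet_Ioc i1 i2]
        have b1 : (∫ r in Ioc p (p+(n:ℝ)), β r) ≤ n * Cε := ih p (p+n) h0p hppn le_rfl
        have b2 : (∫ r in Ioc (p+(n:ℝ)) q, β r) ≤ Cε := by
          have hsub : Ioc (p+(n:ℝ)) q ⊆ Icc (p+(n:ℝ)) (p+(n:ℝ)+1) := by
            intro x hx
            exact ⟨hx.1.le, hx.2.trans (by linarith)⟩
          calc (∫ r in Ioc (p+(n:ℝ)) q, β r) ≤ ∫ r in Icc (p+(n:ℝ)) (p+(n:ℝ)+1), β r := by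
                refine setIntegral_mono_set
                  (beta_int hβint (p+n) (p+n+1) (by linarith)) ?_
                  (HasSubset.Subset.eventuallyLE hsub)
                exact Filter.Eventually.of_forall (fun x => hβ0 x)
            _ ≤ Cε := hβ (p+n) (by linarith)
        push_cast
        linarith

/-- Gronwall-type lemma with a perturbation β having small integral over unit
    intervals (passage from (5.14) to (5.15) in the dissipativity proof of
    Theorem 5.2). -/
theorem gronwall_small_perturbation
    (y y' β f : ℝ → ℝ) (α Cε : ℝ) (hα : 0 < α)
    (hy : ∀ t ∈ Set.Ici (0:ℝ), HasDerivAt y (y' t) t)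
    (hy0 : ∀ t ∈ Set.Ici (0:ℝ), 0 ≤ y t)
    (hβ0 : ∀ t : ℝ, 0 ≤ β t)
    (hβint : ∀ t : ℝ, IntegrableOn β (Set.Icc t (t + 1)))
    (hβ : ∀ t ≥ (0:ℝ), ∫ r in Set.Icc t (t + 1), β r ≤ Cε)
    (hCε : Cε < α / 16)
    (hf0 : ∀ t : ℝ, 0 ≤ f t)
    (hfint : ∀ t : ℝ, IntegrableOn f (Set.Icc 0 t))
    (hineq : ∀ t ≥ (0:ℝ), y' t + (α / 4) * y t ≤ 2 * β t * y t + f t) :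
    ∀ t ≥ (0:ℝ),
      y t ≤ Real.exp (-(α / 8) * t + α / 8) * y 0 +
        Real.exp (α / 8) * ∫ s in Set.Icc (0:ℝ) t,
          Real.exp (-(α / 8) * (t - s)) * f s := by
  intro t ht
  have hCε0 : 0 ≤ Cε := by
    have h1 : (0:ℝ) ≤ ∫ r in Icc (0:ℝ) (0+1), β r :=
      setIntegral_nonneg measurableSet_Icc (fun x _ => hβ0 x)
    linarith [hβ 0 le_rfl]
  set a : ℝ → ℝ := fun r => 2 * β r with ha
  set A : ℝ → ℝ := fun r => ∫ q in (0:ℝ)..r, 2 * β q with hAdef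
  have haint : IntegrableOn a (Icc 0 t) := (beta_int hβint 0 t le_rfl).const_mul 2
  have haII : ∀ p q : ℝ, 0 ≤ p → p ≤ q → IntervalIntegrable a volume p q := by
    intro p q h0p hpq
    rw [intervalIntegrable_iff_integrableOn_Icc_of_le hpq]
    exact (beta_int hβint p q h0p).const_mul 2
  have hAspec : ∀ p q : ℝ, 0 ≤ p → p ≤ q → q ≤ t → (∫ r in p..q, a r) = A q - A p := by
    intro p q h0p hpq _
    have h1 := intervalIntegral.integral_interval_sub_left
      (haII 0 q le_rfl (h0p.trans hpq)) (haII 0 p le_rfl h0p)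
    simp only [hAdef, ha] at h1 ⊢
    linarith [h1]
  have hA0 : A 0 = 0 := intervalIntegral.integral_same
  have hAbnd : ∀ p q : ℝ, 0 ≤ p → p ≤ q → q ≤ t →
      A q - A p ≤ α/8 * (q - p) + α/8 := by
    intro p q h0p hpq hqt
    have h1 : (∫ r in p..q, a r) = A q - A p := hAspec p q h0p hpq hqt
    have h2 : (∫ r in p..q, a r) = 2 * ∫ r in Ioc p q, β r := by
      simp only [ha]
      rw [intervalIntegral.integral_of_le hpq, integral_const_mul]
    set n := ⌈q - p⌉₊ with hn
    have h3 : (∫ r in Ioc p q, β r) ≤ (n:ℝ) * Cε :=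
      beta_bound hβ0 hβint hβ hCε0 n p q h0p hpq (by linarith [Nat.le_ceil (q-p)])
    have h4 : (n:ℝ) < (q - p) + 1 := Nat.ceil_lt_add_one (by linarith)
    have h5 : 2 * Cε ≤ α / 8 := by linarith
    have h6 : (n:ℝ) * Cε ≤ ((q-p) + 1) * Cε := mul_le_mul_of_nonneg_right h4.le hCε0
    have h7 : 2 * (((q-p) + 1) * Cε) ≤ (α/8) * ((q-p) + 1) := by nlinarith
    nlinarith
  -- transformed function
  set u : ℝ → ℝ := fun r => Real.exp (α/4 * r) * y r with hu_def
  set v : ℝ → ℝ := fun r => Real.exp (α/4 * r) * y' r + (α/4 * Real.exp (α/4 * r)) * y r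
    with hv_def
  have huderiv : ∀ r ∈ Icc (0:ℝ) t, HasDerivAt u (v r) r := by
    intro r hr
    have h1 : HasDerivAt (fun x : ℝ => α/4 * x) (α/4) r := by
      simpa using (hasDerivAt_id r).const_mul (α/4)
    have h2 : HasDerivAt (fun x => Real.exp (α/4 * x)) (Real.exp (α/4 * r) * (α/4)) r := h1.exp
    have h3 := h2.mul (hy r hr.1)
    refine h3.congr_deriv ?_
    show _ = Real.exp (α/4 * r) * y' r + (α/4 * Real.exp (α/4 * r)) * y r
    ring
  have hu0 : u 0 = y 0 := by simp [hu_def]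
  have hg0' : ∀ r : ℝ, 0 ≤ Real.exp (α/4 * r) * f r :=
    fun r => mul_nonneg (Real.exp_pos _).le (hf0 r)
  have hcexp : Continuous fun r : ℝ => Real.exp (α/4 * r) :=
    Real.continuous_exp.comp (continuous_const.mul continuous_id)
  have hgint' : IntegrableOn (fun r => Real.exp (α/4 * r) * f r) (Icc 0 t) :=
    integrableOn_cont_mul (hfint t) hcexp.continuousOn
  have ha0 : ∀ r, 0 ≤ a r := fun r => by
    simp only [ha]; exact mul_nonneg (by norm_num) (hβ0 r)
  have hineq' : ∀ r ∈ Icc (0:ℝ) t, v r ≤ a r * u r + Real.exp (α/4 * r) * f r := by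
    intro r hr
    have h1 := hineq r hr.1
    have hE : (0:ℝ) ≤ Real.exp (α/4 * r) := (Real.exp_pos _).le
    have h2 : Real.exp (α/4 * r) * (y' r + α/4 * y r) ≤
        Real.exp (α/4 * r) * (2 * β r * y r + f r) := by
      refine mul_le_mul_of_nonneg_left ?_ hE
      linarith
    calc v r = Real.exp (α/4 * r) * (y' r + α/4 * y r) := by simp only [hv_def]; ring
      _ ≤ Real.exp (α/4 * r) * (2 * β r * y r + f r) := h2
      _ = a r * u r + Real.exp (α/4 * r) * f r := by simp only [ha, hu_def]; ring
  have hu00 : 0 ≤ u 0 := by rw [hu0]; exact hy0 0 (self_mem_Ici)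
  have hcore := gronwall_core ht huderiv hu00 ha0 haint hg0' hgint' hAspec hA0 hineq'
  -- final assembly
  have hyt : y t = Real.exp (-(α/4 * t)) * u t := by
    simp only [hu_def]
    rw [← mul_assoc, ← Real.exp_add, neg_add_cancel, Real.exp_zero, one_mul]
  set I := ∫ s in Ioc (0:ℝ) t, Real.exp (-A s) * (Real.exp (α/4 * s) * f s) with hI
  have hEneg : (0:ℝ) ≤ Real.exp (-(α/4 * t)) := (Real.exp_pos _).le
  have step1 : y t ≤ Real.exp (-(α/4 * t)) * (Real.exp (A t) * (y 0 + I)) := by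
    rw [hyt, ← hu0]
    exact mul_le_mul_of_nonneg_left hcore hEneg
  have hsplit : Real.exp (-(α/4 * t)) * (Real.exp (A t) * (y 0 + I)) =
      Real.exp (-(α/4 * t) + A t) * y 0 + Real.exp (-(α/4 * t) + A t) * I := by
    rw [Real.exp_add]; ring
  -- first term
  have hAt : A t ≤ α/8 * t + α/8 := by
    have := hAbnd 0 t le_rfl ht le_rfl
    rw [hA0] at this
    linarith
  have term1 : Real.exp (-(α/4 * t) + A t) * y 0 ≤ Real.exp (-(α/8) * t + α/8) * y 0 := by
    refine mul_le_mul_of_nonneg_right (Real.exp_le_exp.2 (by linarith)) (hy0 0 (self_mem_Ici))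
  -- second term
  have hcontk : ContinuousOn (fun s : ℝ => Real.exp (-(α/8) * (t - s))) (Icc 0 t) :=
    (Real.continuous_exp.comp (continuous_const.mul (continuous_const.sub continuous_id))).continuousOn
  have hint2 : IntegrableOn (fun s : ℝ => Real.exp (-(α/8) * (t - s)) * f s) (Icc 0 t) :=
    integrableOn_cont_mul (hfint t) hcontk
  have hint2' : IntegrableOn
      (fun s : ℝ => Real.exp (α/8) * (Real.exp (-(α/8) * (t - s)) * f s)) (Ioc 0 t) :=
    (hint2.mono_set Ioc_subset_Icc_self).const_mul _
  have hAcont : ContinuousOn A (Icc 0 t) := by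
    have h1 : ContinuousOn (fun x => A 0 + ∫ r in Ioc (0:ℝ) x, a r) (Icc 0 t) :=
      continuousOn_const.add (intervalIntegral.continuousOn_primitive haint)
    refine ContinuousOn.congr h1 ?_
    intro x hx
    have h2 := hAspec 0 x le_rfl hx.1 hx.2
    rw [intervalIntegral.integral_of_le hx.1] at h2
    dsimp only
    linarith [h2]
  have hE'cont : ContinuousOn (fun r => Real.exp (-A r)) (Icc 0 t) :=
    Real.continuous_exp.comp_continuousOn hAcont.neg
  have hint1 : IntegrableOn
      (fun s : ℝ => Real.exp (-(α/4 * t) + A t) * (Real.exp (-A s) * (Real.exp (α/4 * s) * f s)))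
      (Ioc 0 t) :=
    ((integrableOn_cont_mul hgint' hE'cont).mono_set Ioc_subset_Icc_self).const_mul _
  have term2 : Real.exp (-(α/4 * t) + A t) * I ≤
      Real.exp (α/8) * ∫ s in Ioc (0:ℝ) t, Real.exp (-(α/8) * (t - s)) * f s := by
    rw [hI, ← integral_const_mul, ← integral_const_mul]
    refine setIntegral_mono_on hint1 hint2' measurableSet_Ioc ?_
    intro s hs
    have hs0 : (0:ℝ) ≤ s := hs.1.le
    have hAs : A t - A s ≤ α/8 * (t - s) + α/8 := hAbnd s t hs0 hs.2 le_rfl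
    have lhs_eq : Real.exp (-(α/4 * t) + A t) * (Real.exp (-A s) * (Real.exp (α/4 * s) * f s)) =
        Real.exp ((-(α/4 * t) + A t) + -A s + α/4 * s) * f s := by
      simp only [Real.exp_add]; ring
    have rhs_eq : Real.exp (α/8) * (Real.exp (-(α/8) * (t - s)) * f s) =
        Real.exp (α/8 + -(α/8) * (t - s)) * f s := by
      simp only [Real.exp_add]; ring
    rw [lhs_eq, rhs_eq]
    refine mul_le_mul_of_nonneg_right (Real.exp_le_exp.2 (by linarith)) (hf0 s)
  have hIccIoc : (∫ s in Icc (0:ℝ) t, Real.exp (-(α/8) * (t - s)) * f s) =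
      ∫ s in Ioc (0:ℝ) t, Real.exp (-(α/8) * (t - s)) * f s :=
    integral_Icc_eq_integral_Ioc
  rw [hIccIoc]
  calc y t ≤ Real.exp (-(α/4 * t)) * (Real.exp (A t) * (y 0 + I)) := step1
    _ = Real.exp (-(α/4 * t) + A t) * y 0 + Real.exp (-(α/4 * t) + A t) * I := hsplit
    _ ≤ _ := add_le_add term1 term2
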